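/- If a hypergraph G contains a β-cycle of length ℓ ≥ 3, then nsw(G) ≥ ℓ − 1. -/

import Mathlib

open Finset

/-- `N` is a nest-set of the hypergraph with edge set `E`: the family
`{e \ N : e ∈ E, e ∩ N ≠ ∅}` is totally ordered by inclusion. -/
def IsNestSet {V : Type*} [DecidableEq V] (E : Finset (Finset V)) (N : Finset V) : Prop :=
  ∀ e₁ ∈ E, ∀ e₂ ∈ E, (e₁ ∩ N).Nonempty → (e₂ ∩ N).Nonempty →
    e₁ \ N ⊆ e₂ \ N ∨ e₂ \ N ⊆ e₁ \ N

/-- `v` is a nest point: the edges containing `v` are totally ordered by inclusion. -/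
def IsNestPoint {V : Type*} (E : Finset (Finset V)) (v : V) : Prop :=
  ∀ e₁ ∈ E, ∀ e₂ ∈ E, v ∈ e₁ → v ∈ e₂ → e₁ ⊆ e₂ ∨ e₂ ⊆ e₁

/-- The edge set of the hypergraph `G - N`. -/
def hreduce {V : Type*} [DecidableEq V] (E : Finset (Finset V)) (N : Finset V) :
    Finset (Finset V) :=
  (E.image (fun e => e \ N)).filter (fun e => 2 ≤ e.card)

/-- `gap(G, N) = max { |N| - |e ∩ N| : e ∈ E, e ∩ N ≠ ∅ }`. -/
def hgap {V : Type*} [DecidableEq V] (E : Finset (Finset V)) (N : Finset V) : ℕ :=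
  (E.filter (fun e => (e ∩ N).Nonempty)).sup (fun e => N.card - (e ∩ N).card)

/-- `L = N₁, …, N_t` is a nest-set elimination order of the hypergraph with node set `Vs`
and edge set `E`. -/
def IsElimOrder {V : Type*} [DecidableEq V] (Vs : Finset V) (E : Finset (Finset V))
    (L : List (Finset V)) : Prop :=
  L.Pairwise Disjoint ∧ (∀ N ∈ L, N.Nonempty) ∧ L.foldr (· ∪ ·) ∅ = Vs ∧
  ∀ i : Fin L.length, IsNestSet ((L.take i).foldl hreduce E) (L.get i)

/-- The nest-set width of an elimination order: maximum cardinality of an element. -/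
def nswOf {V : Type*} (L : List (Finset V)) : ℕ := (L.map Finset.card).foldr max 0

/-- The nest-set gap of an elimination order: max over `i` of
`gap(G - N₁ - ⋯ - N_{i-1}, N_i)`. -/
def nsgOf {V : Type*} [DecidableEq V] (E : Finset (Finset V)) (L : List (Finset V)) : ℕ :=
  ((List.range L.length).map
    (fun i => hgap ((L.take i).foldl hreduce E) (L.getD i ∅))).foldr max 0

/-- A β-cycle `v₀, e₀, v₁, e₁, …, v_{ℓ-1}, e_{ℓ-1}, v₀` of length `ℓ = l + 3 ≥ 3` in the
hypergraph with edge set `E`: distinct nodes, distinct edges, and `v i` belongs to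
`e (i-1)`, `e i` and to no other `e j` (indices cyclic in `Fin (l + 3)`). -/
def IsBetaCycle {V : Type*} (E : Finset (Finset V)) (l : ℕ)
    (v : Fin (l + 3) → V) (e : Fin (l + 3) → Finset V) : Prop :=
  Function.Injective v ∧ Function.Injective e ∧ (∀ i, e i ∈ E) ∧
  ∀ i j, v i ∈ e j ↔ (j = i ∨ j + 1 = i)

open Fin.CommRing in
/-- If a hypergraph `G = (Vs, E)` contains a β-cycle of length `ℓ = l + 3 ≥ 3`, then
`nsw(G) ≥ ℓ - 1`; i.e. every nest-set elimination order has an element of cardinality at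
least `ℓ - 1 = l + 2`. -/
lemma nest_card {V : Type*} [DecidableEq V] {E : Finset (Finset V)} {l : ℕ}
    {v : Fin (l+3) → V} {e : Fin (l+3) → Finset V} (hC : IsBetaCycle E l v e)
    {N : Finset V} (hN : IsNestSet E N) (i₀ : Fin (l+3)) (h0 : v i₀ ∈ N) :
    l + 2 ≤ N.card := by
  obtain ⟨hvinj, heinj, hmem, hvm⟩ := hC
  by_cases hall : ∀ j : Fin (l+3), v j ∈ N
  · -- all cycle vertices in N
    have : (Finset.univ.image v).card ≤ N.card := by
      apply Finset.card_le_card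
      intro x hx
      obtain ⟨j, _, rfl⟩ := Finset.mem_image.mp hx
      exact hall j
    rw [Finset.card_image_of_injective _ hvinj, Finset.card_univ, Fintype.card_fin] at this
    omega
  push_neg at hall
  obtain ⟨a, ha⟩ := hall
  -- find pivot i with v i ∈ N, v (i-1) ∉ N
  have hex : ∃ d : ℕ, v (a + ((d+1 : ℕ) : Fin (l+3))) ∈ N := by
    refine ⟨(i₀ - a).val - 1, ?_⟩
    have hne : i₀ ≠ a := fun h => ha (h ▸ h0)
    have hsub : i₀ - a ≠ 0 := sub_ne_zero.mpr hne
    have hval : (i₀ - a).val ≠ 0 := by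
      intro h
      exact hsub (Fin.ext (by simpa using h))
    have : ((i₀ - a).val - 1 + 1 : ℕ) = (i₀ - a).val := by omega
    rw [this, Fin.cast_val_eq_self, add_sub_cancel]
    exact h0
  classical
  set d := Nat.find hex with hd
  set i : Fin (l+3) := a + ((d+1 : ℕ) : Fin (l+3)) with hi
  have hiN : v i ∈ N := Nat.find_spec hex
  have hprev : v (i - 1) ∉ N := by
    have : i - 1 = a + ((d : ℕ) : Fin (l+3)) := by
      rw [hi]
      push_cast
      ring
    rw [this]
    rcases Nat.eq_zero_or_pos d with h | h
    · simpa [h] using ha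
    · have := Nat.find_min hex (m := d - 1) (by omega)
      have hd1 : (d - 1 + 1 : ℕ) = d := by omega
      rwa [hd1] at this
  -- shifted cycle
  set w : ℕ → V := fun m => v (i + (m : Fin (l+3))) with hw
  set f : ℕ → Finset V := fun m => e (i + (m : Fin (l+3))) with hf
  have hmm : ∀ a b : ℕ, w a ∈ f b ↔ (b % (l+3) = a % (l+3) ∨ (b+1) % (l+3) = a % (l+3)) := by
    intro a b
    rw [hw, hf]
    simp only
    rw [hvm]
    constructor
    · rintro (h | h)
      · left
        have := add_left_cancel h
        rwa [Fin.ext_iff, Fin.val_natCast, Fin.val_natCast] at this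
      · right
        rw [add_assoc] at h
        have := add_left_cancel h
        have h2 : ((b : Fin (l+3)) + 1) = ((b+1 : ℕ) : Fin (l+3)) := by push_cast; ring
        rw [h2] at this
        rwa [Fin.ext_iff, Fin.val_natCast, Fin.val_natCast] at this
    · rintro (h | h)
      · left
        congr 1
        rwa [Fin.ext_iff, Fin.val_natCast, Fin.val_natCast]
      · right
        rw [add_assoc]
        congr 1
        have h2 : ((b : Fin (l+3)) + 1) = ((b+1 : ℕ) : Fin (l+3)) := by push_cast; ring
        rw [h2]
        rwa [Fin.ext_iff, Fin.val_natCast, Fin.val_natCast]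
  have hw0 : w 0 ∈ N := by simpa [hw] using hiN
  have hwprev : w (l+2) ∉ N := by
    have key : i + ((l+2 : ℕ) : Fin (l+3)) = i - 1 := by
      have h3 : ((l+3 : ℕ) : Fin (l+3)) = 0 := by
        rw [Fin.ext_iff, Fin.val_natCast]; simp
      have h2 : ((l+2 : ℕ) : Fin (l+3)) = -1 := by
        push_cast at h3 ⊢
        linear_combination h3
      rw [h2]; ring
    show v (i + ((l+2 : ℕ) : Fin (l+3))) ∉ N
    rw [key]; exact hprev
  have hfmem : ∀ m : ℕ, f m ∈ E := fun m => hmem _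
  -- claim A : for m ≤ l, if f m meets N then f m \ N ⊆ f (l+2) \ N
  have hA : ∀ m : ℕ, m ≤ l → (f m ∩ N).Nonempty → f m \ N ⊆ f (l+2) \ N := by
    intro m hm hne
    have hne2 : (f (l+2) ∩ N).Nonempty :=
      ⟨w 0, Finset.mem_inter.mpr ⟨(hmm 0 (l+2)).mpr (by right; show (l+3) % (l+3) = 0 % (l+3); simp), hw0⟩⟩
    rcases hN _ (hfmem m) _ (hfmem (l+2)) hne hne2 with h | h
    · exact h
    · exfalso
      have hwp : w (l+2) ∈ f (l+2) \ N :=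
        Finset.mem_sdiff.mpr ⟨(hmm (l+2) (l+2)).mpr (by left; rfl), hwprev⟩
      have := Finset.mem_sdiff.mp (h hwp)
      rcases (hmm (l+2) m).mp this.1 with h' | h'
      · rw [Nat.mod_eq_of_lt (show m < l+3 by omega),
          Nat.mod_eq_of_lt (show l+2 < l+3 by omega)] at h'
        omega
      · rw [Nat.mod_eq_of_lt (show m+1 < l+3 by omega),
          Nat.mod_eq_of_lt (show l+2 < l+3 by omega)] at h'
        omega
  -- claim B : v' m ∈ N for m ≤ l+1
  have hB : ∀ m : ℕ, m ≤ l + 1 → w m ∈ N := by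
    intro m
    induction m with
    | zero => intro _; exact hw0
    | succ k ih =>
      intro hk
      have hkN := ih (by omega)
      have hsub := hA k (by omega) ⟨w k, Finset.mem_inter.mpr
        ⟨(hmm k k).mpr (by left; rfl), hkN⟩⟩
      by_contra hc
      have hin : w (k+1) ∈ f k \ N :=
        Finset.mem_sdiff.mpr ⟨(hmm (k+1) k).mpr (by right; rfl), hc⟩
      have := Finset.mem_sdiff.mp (hsub hin)
      rcases (hmm (k+1) (l+2)).mp this.1 with h' | h'
      · rw [Nat.mod_eq_of_lt (by omega), Nat.mod_eq_of_lt (by omega)] at h'; omega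
      · rw [Nat.mod_self, Nat.mod_eq_of_lt (by omega)] at h'; omega
  -- conclude
  have hcard : ((Finset.range (l+2)).image w).card ≤ N.card := by
    apply Finset.card_le_card
    intro x hx
    obtain ⟨m, hm, rfl⟩ := Finset.mem_image.mp hx
    exact hB m (by simp at hm; omega)
  rw [Finset.card_image_of_injOn] at hcard
  · rwa [Finset.card_range] at hcard
  · intro x hx y hy hxy
    simp only [Finset.mem_coe, Finset.mem_range] at hx hy
    have := hvinj hxy
    have := add_left_cancel this
    rw [Fin.ext_iff, Fin.val_natCast, Fin.val_natCast,
      Nat.mod_eq_of_lt (by omega), Nat.mod_eq_of_lt (by omega)] at this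
    exact this

open Fin.CommRing in
lemma beta_reduce {V : Type*} [DecidableEq V] {E : Finset (Finset V)} {l : ℕ}
    {v : Fin (l+3) → V} {e : Fin (l+3) → Finset V} (hC : IsBetaCycle E l v e)
    {N : Finset V} (hN : ∀ i, v i ∉ N) :
    IsBetaCycle (hreduce E N) l v (fun i => e i \ N) := by
  obtain ⟨hvinj, heinj, hmem, hvm⟩ := hC
  have hmem' : ∀ i j, v i ∈ e j \ N ↔ (j = i ∨ j + 1 = i) := by
    intro i j
    rw [Finset.mem_sdiff]
    constructor
    · exact fun h => (hvm i j).mp h.1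
    · exact fun h => ⟨(hvm i j).mpr h, hN i⟩
  have hone : (1 : Fin (l+3)) ≠ 0 := by
    intro h
    rw [Fin.ext_iff] at h
    simp at h
  have htwo : (2 : Fin (l+3)) ≠ 0 := by
    intro h
    rw [show (2 : Fin (l+3)) = ((2:ℕ) : Fin (l+3)) by push_cast; ring,
      Fin.ext_iff, Fin.val_natCast, Nat.mod_eq_of_lt (by omega)] at h
    simp at h
  refine ⟨hvinj, ?_, ?_, hmem'⟩
  · intro a b hab
    simp only at hab
    have h1 : v a ∈ e b \ N := by rw [← hab]; exact (hmem' a a).mpr (Or.inl rfl)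
    have h2 : v (a+1) ∈ e b \ N := by rw [← hab]; exact (hmem' (a+1) a).mpr (Or.inr rfl)
    rcases (hmem' (a+1) b).mp h2 with h' | h'
    · exfalso
      rcases (hmem' a b).mp h1 with h | h
      · rw [h'] at h
        exact hone (by linear_combination h)
      · rw [h'] at h
        exact htwo (by linear_combination h)
    · exact add_right_cancel h' ▸ rfl
  · intro i
    rw [hreduce, Finset.mem_filter]
    constructor
    · exact Finset.mem_image.mpr ⟨e i, hmem i, rfl⟩
    · have hsub : {v i, v (i+1)} ⊆ e i \ N := by
        intro x hx
        rcases Finset.mem_insert.mp hx with rfl | hx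
        · exact (hmem' i i).mpr (Or.inl rfl)
        · rw [Finset.mem_singleton.mp hx]
          exact (hmem' (i+1) i).mpr (Or.inr rfl)
      have hne : v i ≠ v (i+1) := by
        intro h
        have := hvinj h
        exact hone (by linear_combination this.symm)
      calc 2 = ({v i, v (i+1)} : Finset V).card := by rw [Finset.card_insert_of_notMem (by simpa using hne), Finset.card_singleton]
        _ ≤ (e i \ N).card := Finset.card_le_card hsub

lemma mem_foldr_union {V : Type*} [DecidableEq V] (L : List (Finset V)) (x : V) :
    x ∈ L.foldr (· ∪ ·) ∅ ↔ ∃ N ∈ L, x ∈ N := by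
  induction L with
  | nil => simp
  | cons N L ih => simp [ih]

lemma main_aux {V : Type*} [DecidableEq V] (l : ℕ) (v : Fin (l+3) → V) :
    ∀ (L : List (Finset V)) (E : Finset (Finset V)) (e : Fin (l+3) → Finset V),
      IsBetaCycle E l v e →
      (∀ i : Fin L.length, IsNestSet ((L.take i).foldl hreduce E) (L.get i)) →
      (∃ N ∈ L, ∃ i, v i ∈ N) → ∃ N ∈ L, l + 2 ≤ N.card := by
  intro L
  induction L with
  | nil => intro E e _ _ h; simp at h
  | cons N L ih =>
    intro E e hC hnest hex
    by_cases hN : ∃ i, v i ∈ N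
    · obtain ⟨i, hi⟩ := hN
      have h0 := hnest ⟨0, by simp⟩
      simp only [List.take_zero, List.foldl_nil, List.get] at h0
      exact ⟨N, List.mem_cons_self, nest_card hC h0 i hi⟩
    · push_neg at hN
      have hC' := beta_reduce hC hN
      have hnest' : ∀ i : Fin L.length,
          IsNestSet ((L.take i).foldl hreduce (hreduce E N)) (L.get i) := by
        intro i
        have := hnest i.succ
        simpa using this
      have hex' : ∃ N' ∈ L, ∃ i, v i ∈ N' := by
        obtain ⟨N', hN', i, hi⟩ := hex
        rcases List.mem_cons.mp hN' with rfl | h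
        · exact absurd hi (hN i)
        · exact ⟨N', h, i, hi⟩
      obtain ⟨N', hN', hcard⟩ := ih (hreduce E N) (fun i => e i \ N) hC' hnest' hex'
      exact ⟨N', List.mem_cons_of_mem _ hN', hcard⟩

theorem stmt_7 {V : Type*} [DecidableEq V] (Vs : Finset V) (E : Finset (Finset V))
    (hE : ∀ e ∈ E, e ⊆ Vs) (l : ℕ)
    (v : Fin (l + 3) → V) (e : Fin (l + 3) → Finset V)
    (hC : IsBetaCycle E l v e) :
    ∀ L : List (Finset V), IsElimOrder Vs E L → ∃ N ∈ L, l + 2 ≤ N.card := by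
  intro L hL
  have hcov := hL.2.2.1
  have hnest := hL.2.2.2
  have hv0 : v 0 ∈ Vs := hE (e 0) (hC.2.2.1 0) ((hC.2.2.2 0 0).mpr (Or.inl rfl))
  rw [← hcov, mem_foldr_union] at hv0
  obtain ⟨N, hNL, hvN⟩ := hv0
  exact main_aux l v L E e hC hnest ⟨N, hNL, 0, hvN⟩
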